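/- Let y be a Perron number with y > 2 all of whose Galois conjugates are real and strictly greater than −2, and let x > 1 be the real number satisfying x + x⁻¹ = y. Then x is a bi-Perron number and every Galois conjugate of x lies in S¹ ∪ ℝ_{>0}. -/

import Mathlib

open Polynomial

/-- The Galois conjugates of a real algebraic number: the complex roots of its
minimal polynomial over `ℚ`. -/
def galoisConjugates (x : ℝ) : Set ℂ :=
  {z : ℂ | Polynomial.aeval z (minpoly ℚ x) = 0}

/-- A Perron number: a real algebraic integer `l > 1` all of whose Galois conjugates
other than `l` itself have modulus strictly less than `l`. -/
def IsPerron (l : ℝ) : Prop :=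
  1 < l ∧ IsIntegral ℤ l ∧
    ∀ z : ℂ, z ∈ galoisConjugates l → z ≠ (l : ℂ) → ‖z‖ < l

/-- A bi-Perron number: a real algebraic unit `l > 1` such that every Galois conjugate
`μ ∉ {l, l⁻¹, -l⁻¹}` satisfies `l⁻¹ < |μ| < l`, and at most one of `l⁻¹, -l⁻¹` is a
Galois conjugate of `l`. -/
def IsBiPerron (l : ℝ) : Prop :=
  1 < l ∧ IsIntegral ℤ l ∧
    ((minpoly ℚ l).coeff 0 = 1 ∨ (minpoly ℚ l).coeff 0 = -1) ∧
    (∀ z : ℂ, z ∈ galoisConjugates l → z ≠ (l : ℂ) → z ≠ ((l : ℂ))⁻¹ → z ≠ -((l : ℂ))⁻¹ →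
      (l⁻¹ < ‖z‖ ∧ ‖z‖ < l)) ∧
    ¬((((l : ℂ))⁻¹ ∈ galoisConjugates l) ∧ ((-((l : ℂ))⁻¹) ∈ galoisConjugates l))

/-- Monotonicity of `t ↦ t + t⁻¹` on `[1, ∞)`. -/
lemma aux_mono {a b : ℝ} (ha : 1 ≤ a) (hab : a ≤ b) : a + a⁻¹ ≤ b + b⁻¹ := by
  have ha0 : (0:ℝ) < a := lt_of_lt_of_le one_pos ha
  have hb0 : (0:ℝ) < b := lt_of_lt_of_le ha0 hab
  have h1 : a * a⁻¹ = 1 := mul_inv_cancel₀ ha0.ne'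
  have h2 : b * b⁻¹ = 1 := mul_inv_cancel₀ hb0.ne'
  have h3 : 0 < a⁻¹ := inv_pos.mpr ha0
  have h4 : 0 < b⁻¹ := inv_pos.mpr hb0
  have h5 : a⁻¹ ≤ 1 := by nlinarith
  have h6 : b⁻¹ ≤ 1 := by nlinarith
  have key : (b - a) * (1 - a⁻¹ * b⁻¹) = b + b⁻¹ - (a + a⁻¹) := by
    have : a⁻¹ - b⁻¹ = (b - a) * (a⁻¹ * b⁻¹) := by
      field_simp
    nlinarith [this]
  nlinarith [mul_nonneg (sub_nonneg.mpr hab) (by nlinarith : (0:ℝ) ≤ 1 - a⁻¹ * b⁻¹)]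

open IntermediateField in
/-- Every Galois conjugate of `x` is nonzero and `z + z⁻¹` is a Galois conjugate
of `y = x + x⁻¹`. -/
lemma conj_plus_inv {x y : ℝ} (hx0 : x ≠ 0) (hint : IsIntegral ℚ x)
    (hxy : x + x⁻¹ = y) {z : ℂ} (hz : z ∈ galoisConjugates x) :
    z ≠ 0 ∧ z + z⁻¹ ∈ galoisConjugates y := by
  set K := ℚ⟮x⟯ with hK
  let pb : PowerBasis ℚ K := adjoin.powerBasis hint
  have hgen : algebraMap K ℝ pb.gen = x := by
    simp [pb, adjoin.powerBasis_gen]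
  have hminx : minpoly ℚ pb.gen = minpoly ℚ x := by
    rw [← hgen, minpoly.algebraMap_eq (algebraMap K ℝ).injective]
  have hz' : Polynomial.aeval z (minpoly ℚ pb.gen) = 0 := by rw [hminx]; exact hz
  let σ : K →ₐ[ℚ] ℂ := pb.lift z hz'
  have hσg : σ pb.gen = z := pb.lift_gen z hz'
  have hgenne : pb.gen ≠ 0 := by
    intro h
    apply hx0
    rw [← hgen, h, map_zero]
  have hz0 : z ≠ 0 := by
    rw [← hσg]
    intro h
    exact hgenne (σ.toRingHom.injective (h.trans (map_zero σ.toRingHom).symm))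
  refine ⟨hz0, ?_⟩
  have hyK : y ∈ K := by
    rw [← hxy]
    exact add_mem (mem_adjoin_simple_self ℚ x) (inv_mem (mem_adjoin_simple_self ℚ x))
  have hmap : algebraMap K ℝ (pb.gen + pb.gen⁻¹) = y := by
    rw [map_add, map_inv₀, hgen, hxy]
  have hyKeq : (⟨y, hyK⟩ : K) = pb.gen + pb.gen⁻¹ := by
    apply (algebraMap K ℝ).injective
    rw [hmap]
    rfl
  have hminy : minpoly ℚ (⟨y, hyK⟩ : K) = minpoly ℚ y := by
    have h := minpoly.algebraMap_eq (A := ℚ) (algebraMap K ℝ).injective (⟨y, hyK⟩ : K)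
    rw [show algebraMap K ℝ (⟨y, hyK⟩ : K) = y from rfl] at h
    exact h.symm
  have hval : σ (⟨y, hyK⟩ : K) = z + z⁻¹ := by
    rw [hyKeq, map_add, map_inv₀, hσg]
  show Polynomial.aeval (z + z⁻¹) (minpoly ℚ y) = 0
  rw [← hval, ← hminy, Polynomial.aeval_algHom_apply, minpoly.aeval, map_zero]

/-- Classification of the roots of `z + z⁻¹ = w` for real `w > -2`. -/
lemma quad_class {w : ℝ} {z : ℂ} (hz0 : z ≠ 0) (heq : z + z⁻¹ = (w : ℂ))
    (hw : -2 < w) :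
    ‖z‖ = 1 ∨ ∃ s : ℝ, 0 < s ∧ z = (s : ℂ) ∧ s + s⁻¹ = w := by
  have hzz : z * z⁻¹ = 1 := mul_inv_cancel₀ hz0
  have hq : z ^ 2 - (w : ℂ) * z + 1 = 0 := by
    linear_combination z * heq - hzz
  by_cases him : z.im = 0
  · right
    set s := z.re with hs
    have hzs : z = (s : ℂ) := by
      apply Complex.ext <;> simp [him, hs]
    rw [hzs] at hq
    have hr : s ^ 2 - w * s + 1 = 0 := by exact_mod_cast hq
    have hsne : s ≠ 0 := by
      intro h
      rw [h] at hr
      norm_num at hr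
    have hspos : 0 < s := by
      rcases hsne.lt_or_gt with h | h
      · exfalso
        nlinarith [sq_nonneg (s + 1)]
      · exact h
    refine ⟨s, hspos, hzs, ?_⟩
    have hss : s * s⁻¹ = 1 := mul_inv_cancel₀ hsne
    field_simp
    nlinarith [hr]
  · left
    have hqc : (starRingEnd ℂ z) ^ 2 - (w : ℂ) * (starRingEnd ℂ z) + 1 = 0 := by
      have h := congrArg (starRingEnd ℂ) hq
      simpa [map_pow, Complex.conj_ofReal] using h
    have hne : z ≠ starRingEnd ℂ z := by
      intro h
      exact him (Complex.conj_eq_iff_im.mp h.symm)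
    have hsub : (z - starRingEnd ℂ z) * (z + starRingEnd ℂ z - (w : ℂ)) = 0 := by
      linear_combination hq - hqc
    have hsum : z + starRingEnd ℂ z = (w : ℂ) := by
      rcases mul_eq_zero.mp hsub with h | h
      · exact absurd (sub_eq_zero.mp h) hne
      · linear_combination h
    have hprod : z * starRingEnd ℂ z = 1 := by
      linear_combination z * hsum - hq
    have hns : (Complex.normSq z : ℂ) = 1 := by
      rw [← Complex.mul_conj]; exact hprod
    have h2 : Complex.normSq z = 1 := by exact_mod_cast hns
    rw [Complex.norm_def, h2, Real.sqrt_one]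

theorem biPerron_from_totally_real_perron (y : ℝ) (hy : IsPerron y) (hy2 : 2 < y)
    (hconj : ∀ z ∈ galoisConjugates y, ∃ r : ℝ, z = (r : ℂ) ∧ -2 < r)
    (x : ℝ) (hx : 1 < x) (hxy : x + x⁻¹ = y) :
    IsBiPerron x ∧
    ∀ z ∈ galoisConjugates x, ‖z‖ = 1 ∨ ∃ r : ℝ, 0 < r ∧ z = (r : ℂ) := by
  obtain ⟨hy1, hyInt, hyPerron⟩ := hy
  have hx0' : (0:ℝ) < x := lt_trans one_pos hx
  have hx0 : x ≠ 0 := hx0'.ne'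
  have hxx : x * x⁻¹ = 1 := mul_inv_cancel₀ hx0
  have hxinv_pos : 0 < x⁻¹ := inv_pos.mpr hx0'
  have hxinv1 : x⁻¹ < 1 := by nlinarith
  -- x is an algebraic integer
  have hxZ : IsIntegral ℤ x := by
    set A := Algebra.adjoin ℤ ({y} : Set ℝ) with hA
    haveI : Module.Finite ℤ A := ⟨(Submodule.fg_top _).mpr hyInt.fg_adjoin_singleton⟩
    haveI : Algebra.IsIntegral ℤ A := Algebra.IsIntegral.of_finite ℤ A
    have hyA : y ∈ A := Algebra.self_mem_adjoin_singleton ℤ y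
    have hxA : IsIntegral A x := by
      refine ⟨X ^ 2 + (C (-(⟨y, hyA⟩ : A)) * X + C 1), ?_, ?_⟩
      · apply Polynomial.monic_X_pow_add
        exact lt_of_le_of_lt Polynomial.degree_linear_le (by norm_num)
      · have hb : algebraMap A ℝ (-(⟨y, hyA⟩ : A)) = -y := by
          rw [RingHom.map_neg]; rfl
        rw [Polynomial.eval₂_add, Polynomial.eval₂_add, Polynomial.eval₂_mul,
          Polynomial.eval₂_C, Polynomial.eval₂_C, Polynomial.eval₂_X,
          Polynomial.eval₂_X_pow, hb, map_one]
        linear_combination x * hxy - hxx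
    exact isIntegral_trans x hxA
  have hxQ : IsIntegral ℚ x := hxZ.tower_top
  have hxinvZ : IsIntegral ℤ x⁻¹ := by
    rw [show x⁻¹ = y - x by linarith]
    exact hyInt.sub hxZ
  -- the key classification of conjugates of x
  have key : ∀ z ∈ galoisConjugates x, ‖z‖ = 1 ∨
      ∃ s : ℝ, 0 < s ∧ z = (s : ℂ) ∧ ((s + s⁻¹ : ℝ) : ℂ) ∈ galoisConjugates y := by
    intro z hz
    obtain ⟨hz0, hmem⟩ := conj_plus_inv hx0 hxQ hxy hz
    obtain ⟨w, hw_eq, hw2⟩ := hconj _ hmem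
    rcases quad_class hz0 hw_eq hw2 with h | ⟨s, hs0, hzs, hsw⟩
    · exact Or.inl h
    · refine Or.inr ⟨s, hs0, hzs, ?_⟩
      have hcast : ((s + s⁻¹ : ℝ) : ℂ) = z + z⁻¹ := by
        rw [hzs]; push_cast; ring
      rwa [hcast]
  -- real conjugates s (other than x, x⁻¹) satisfy x⁻¹ < s < x
  have hbound : ∀ s : ℝ, 0 < s → ((s + s⁻¹ : ℝ) : ℂ) ∈ galoisConjugates y →
      s ≠ x → s ≠ x⁻¹ → x⁻¹ < s ∧ s < x := by
    intro s hs0 hmem hsx hsxi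
    have hss : s * s⁻¹ = 1 := mul_inv_cancel₀ hs0.ne'
    by_cases hwy : s + s⁻¹ = y
    · exfalso
      have hyp' : s + s⁻¹ = x + x⁻¹ := by rw [hwy, ← hxy]
      have hfac : (s - x) * (s * x - 1) = 0 := by
        linear_combination (s * x) * hyp' - x * hss + s * hxx
      rcases mul_eq_zero.mp hfac with h | h
      · exact hsx (by linarith [sub_eq_zero.mp h])
      · apply hsxi
        have : s * x = 1 := by linarith
        field_simp
        linarith
    · have hlt : s + s⁻¹ < y := by
        have habs := hyPerron _ hmem (by
          intro h
          exact hwy (by exact_mod_cast h))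
        calc s + s⁻¹ ≤ |s + s⁻¹| := le_abs_self _
          _ = ‖((s + s⁻¹ : ℝ) : ℂ)‖ := by rw [Complex.norm_real, Real.norm_eq_abs]
          _ < y := habs
      constructor
      · by_contra hle
        push_neg at hle
        have hxs : x ≤ s⁻¹ := by
          have h1 : (x⁻¹)⁻¹ ≤ s⁻¹ := by
            apply inv_anti₀ hs0 hle
          rwa [inv_inv] at h1
        have := aux_mono hx.le hxs
        rw [inv_inv] at this
        linarith [hxy]
      · by_contra hle
        push_neg at hle
        have := aux_mono hx.le hle
        linarith [hxy]
  refine ⟨⟨hx, hxZ, ?_, ?_, ?_⟩, ?_⟩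
  · -- constant coefficient is ±1
    set pZ := minpoly ℤ x with hpZ
    set qZ := minpoly ℤ x⁻¹ with hqZ
    have hq0 : Polynomial.aeval x⁻¹ qZ = 0 := minpoly.aeval ℤ x⁻¹
    letI : Invertible (x⁻¹ : ℝ) := invertibleOfNonzero (inv_ne_zero hx0)
    have hinvOf : ⅟(x⁻¹ : ℝ) = x := by rw [invOf_eq_inv, inv_inv]
    have hx_eval : Polynomial.aeval x qZ.reverse = 0 := by
      rw [Polynomial.aeval_def, ← hinvOf]
      rw [Polynomial.eval₂_reverse_eq_zero_iff]
      rw [Polynomial.aeval_def] at hq0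
      exact hq0
    have hdvdQ : minpoly ℚ x ∣ (qZ.reverse).map (algebraMap ℤ ℚ) :=
      minpoly.dvd ℚ x (by rwa [Polynomial.aeval_map_algebraMap])
    have hpq : minpoly ℚ x = pZ.map (algebraMap ℤ ℚ) :=
      minpoly.isIntegrallyClosed_eq_field_fractions' ℚ hxZ
    have hinj : Function.Injective (algebraMap ℤ ℚ) := by
      intro a b h
      exact_mod_cast h
    have hdvdZ : pZ ∣ qZ.reverse := by
      rw [hpq] at hdvdQ
      exact (Polynomial.map_dvd_map (algebraMap ℤ ℚ) hinj (minpoly.monic hxZ)).mp hdvdQ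
    obtain ⟨t, ht⟩ := hdvdZ
    have h1 : (1 : ℤ) = pZ.coeff 0 * t.coeff 0 := by
      have hc : qZ.reverse.coeff 0 = 1 := by
        rw [Polynomial.coeff_zero_reverse]
        exact (minpoly.monic hxinvZ).leadingCoeff
      rw [← hc, ht, Polynomial.mul_coeff_zero]
    have hunit : IsUnit (pZ.coeff 0) := IsUnit.of_mul_eq_one _ h1.symm
    have hcoeff : (minpoly ℚ x).coeff 0 = ((pZ.coeff 0 : ℤ) : ℚ) := by
      rw [hpq, Polynomial.coeff_map]
      rfl
    rcases Int.isUnit_iff.mp hunit with h | h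
    · left; rw [hcoeff, h]; norm_num
    · right; rw [hcoeff, h]; norm_num
  · -- the modulus bounds
    intro z hz hne1 hne2 hne3
    rcases key z hz with h | ⟨s, hs0, hzs, hmem⟩
    · rw [h]; exact ⟨hxinv1, hx⟩
    · have hsx : s ≠ x := by
        intro h; apply hne1; rw [hzs, h]
      have hsxi : s ≠ x⁻¹ := by
        intro h; apply hne2; rw [hzs, h]; push_cast; ring
      obtain ⟨hl, hr⟩ := hbound s hs0 hmem hsx hsxi
      have habs : ‖z‖ = s := by
        rw [hzs, Complex.norm_real, Real.norm_eq_abs, abs_of_pos hs0]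
      rw [habs]
      exact ⟨hl, hr⟩
  · -- -x⁻¹ is not a conjugate
    rintro ⟨-, hmem⟩
    rcases key _ hmem with h | ⟨s, hs0, hzs, -⟩
    · have : ‖-((x:ℂ))⁻¹‖ = x⁻¹ := by
        rw [norm_neg, norm_inv, Complex.norm_real, Real.norm_eq_abs, abs_of_pos hx0']
      rw [this] at h
      linarith
    · have : ((-x⁻¹ : ℝ) : ℂ) = ((s : ℝ) : ℂ) := by
        rw [← hzs]; push_cast; ring
      have hss : (-x⁻¹ : ℝ) = s := by exact_mod_cast this
      linarith
  · -- second conclusion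
    intro z hz
    rcases key z hz with h | ⟨s, hs0, hzs, -⟩
    · exact Or.inl h
    · exact Or.inr ⟨s, hs0, hzs⟩
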